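/- Consider the system dx/dt = −2x − y + 3x² + y² − x(x² + y²), dy/dt = −1 + x + 2xy − y(x² + y²), and let F(x,y) = (((x − 1)² + y²)/(1 − (x − 1)² − y²))·exp(−2·arctan(y/(x − 1))) on the set G = {(x,y) : x ≠ 1 and (x − 1)² + y² ≠ 1}. Then F is differentiable on G and (−2x − y + 3x² + y² − x(x² + y²))·∂F/∂x(x,y) + (−1 + x + 2xy − y(x² + y²))·∂F/∂y(x,y) = 0 for all (x,y) ∈ G; that is, F is a general autonomous integral of the system on any domain contained in G. -/

import Mathlib

/-- `F(x,y) = (((x − 1)² + y²)/(1 − (x − 1)² − y²))·exp(−2·arctan(y/(x − 1)))`. -/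
noncomputable def F10 : ℝ × ℝ → ℝ :=
  fun p => (((p.1 - 1) ^ 2 + p.2 ^ 2) / (1 - (p.1 - 1) ^ 2 - p.2 ^ 2)) *
    Real.exp (-2 * Real.arctan (p.2 / (p.1 - 1)))

/-- `F` is a general autonomous integral of the system
`dx/dt = −2x − y + 3x² + y² − x(x² + y²)`,
`dy/dt = −1 + x + 2xy − y(x² + y²)` on
`G = {(x,y) : x ≠ 1 ∧ (x − 1)² + y² ≠ 1}`. -/
theorem F10_general_autonomous_integral :
    ∀ p : ℝ × ℝ, p.1 ≠ 1 → (p.1 - 1) ^ 2 + p.2 ^ 2 ≠ 1 →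
      DifferentiableAt ℝ F10 p ∧
      (-2 * p.1 - p.2 + 3 * p.1 ^ 2 + p.2 ^ 2 - p.1 * (p.1 ^ 2 + p.2 ^ 2)) *
          fderiv ℝ F10 p (1, 0) +
        (-1 + p.1 + 2 * p.1 * p.2 - p.2 * (p.1 ^ 2 + p.2 ^ 2)) *
          fderiv ℝ F10 p (0, 1) = 0 := by
  rintro ⟨x, y⟩ hx hr
  simp only at hx hr
  have hu : x - 1 ≠ 0 := sub_ne_zero.mpr hx
  have hD : 1 - (x - 1) ^ 2 - y ^ 2 ≠ 0 := by
    intro h; apply hr; nlinarith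
  have h1 : HasFDerivAt (fun p : ℝ × ℝ => p.1 - 1)
      (ContinuousLinearMap.fst ℝ ℝ ℝ) (x, y) := (hasFDerivAt_fst).sub_const 1
  have hsq1 : HasFDerivAt (fun p : ℝ × ℝ => (p.1 - 1) ^ 2)
      (((2 : ℕ) * (x - 1) ^ (2 - 1)) • ContinuousLinearMap.fst ℝ ℝ ℝ) (x, y) :=
    by have := (hasDerivAt_pow 2 (x - 1)).comp_hasFDerivAt (x, y) h1; exact this
  have hsq2 : HasFDerivAt (fun p : ℝ × ℝ => p.2 ^ 2)
      (((2 : ℕ) * y ^ (2 - 1)) • ContinuousLinearMap.snd ℝ ℝ ℝ) (x, y) :=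
    by have := (hasDerivAt_pow 2 y).comp_hasFDerivAt (x, y)
        (hasFDerivAt_snd (𝕜 := ℝ) (E := ℝ) (F := ℝ) (p := (x, y))); exact this
  have h2 := hsq1.add hsq2
  have hden := ((hasFDerivAt_const (1 : ℝ) ((x, y) : ℝ × ℝ)).sub hsq1).sub hsq2
  have hinvden := (hasDerivAt_inv hD).comp_hasFDerivAt (x, y) hden
  have hg := h2.mul hinvden
  have hinvx := (hasDerivAt_inv hu).comp_hasFDerivAt (x, y) h1
  have hdiv := (hasFDerivAt_snd (𝕜 := ℝ) (E := ℝ) (F := ℝ)).mul hinvx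
  have harctan := (Real.hasDerivAt_arctan (y * (x - 1)⁻¹)).comp_hasFDerivAt (x, y) hdiv
  have hneg := HasFDerivAt.const_mul harctan (-2 : ℝ)
  have hexp := (Real.hasDerivAt_exp (-2 * Real.arctan (y * (x - 1)⁻¹))).comp_hasFDerivAt
      (x, y) hneg
  have hF := hg.mul hexp
  simp only [Function.comp_def] at hF
  have heq : F10 = fun p : ℝ × ℝ => ((p.1 - 1) ^ 2 + p.2 ^ 2) *
      (1 - (p.1 - 1) ^ 2 - p.2 ^ 2)⁻¹ * Real.exp (-2 * Real.arctan (p.2 * (p.1 - 1)⁻¹)) := by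
    funext p; simp [F10, div_eq_mul_inv]
  rw [heq]
  refine ⟨hF.differentiableAt, ?_⟩
  rw [HasFDerivAt.fderiv (f := fun p : ℝ × ℝ => ((p.1 - 1) ^ 2 + p.2 ^ 2) *
      (1 - (p.1 - 1) ^ 2 - p.2 ^ 2)⁻¹ * Real.exp (-2 * Real.arctan (p.2 * (p.1 - 1)⁻¹))) hF]
  simp only [ContinuousLinearMap.add_apply, ContinuousLinearMap.smul_apply,
    ContinuousLinearMap.sub_apply, ContinuousLinearMap.coe_fst', ContinuousLinearMap.coe_snd',
    ContinuousLinearMap.zero_apply, smul_eq_mul, Function.comp, Pi.add_apply, Pi.mul_apply,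
    Pi.sub_apply]
  have h1r : 1 + (y * (x - 1)⁻¹) ^ 2 ≠ 0 := by positivity
  field_simp
  ring
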